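/- Let x_0 ∈ ℝ^d be an arbitrary initial iterate and let (x_j) be the random iterates produced by Algorithm 1. Then for every iteration j = 1, 2, 3, …, the expected squared distance to the feasible set satisfies E[d(x_j, S)²] ≤ (1 − 1/(L²(n_i + βm)))^j · d(x_0, S)². -/
import Mathlib


open scoped RealInnerProductSpace BigOperators

noncomputable section

/-- An `(m, β)` row paving of the rows of `a` indexed by `I`: a partition of `I` into `m`
nonempty blocks `T 0, …, T (m-1)` such that for each block `τ`, the row submatrix `A_τ` with
rows `(a i)_{i ∈ τ}` satisfies `λ_max(A_τ A_τ*) ≤ β`, stated equivalently as the quadratic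
bound `‖A_τ x‖² = ∑_{i ∈ τ} ⟪a i, x⟫² ≤ β ‖x‖²` for all `x`. -/
def IsRowPaving {n d : ℕ} (a : Fin n → EuclideanSpace ℝ (Fin d)) (I : Finset (Fin n))
    (m : ℕ) (β : ℝ) (T : Fin m → Finset (Fin n)) : Prop :=
  (∀ k, (T k).Nonempty) ∧
  (∀ k l, k ≠ l → Disjoint (T k) (T l)) ∧
  (Finset.univ.biUnion T = I) ∧
  (∀ k, ∀ x : EuclideanSpace ℝ (Fin d), ∑ i ∈ T k, ⟪a i, x⟫ ^ 2 ≤ β * ‖x‖ ^ 2)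

/-- The random iterates of a Kaczmarz-type algorithm: given the outcomes `ω : Fin j → C` of
`j` independent random choices and an update map `step`, `kacIter step x0 j ω` is the `j`-th
iterate started from `x0`. -/
def kacIter {C V : Type*} (step : C → V → V) (x0 : V) : (j : ℕ) → (Fin j → C) → V
  | 0, _ => x0
  | j + 1, ω => step (ω (Fin.last j)) (kacIter step x0 j fun k => ω k.castSucc)

private lemma aux_card (ne ni : ℕ) :
    (Finset.univ.filter fun i : Fin (ne + ni) => ne ≤ (i : ℕ)).card = ni := by
  rw [Finset.card_filter]
  rw [Fin.sum_univ_eq_sum_range (fun i => if ne ≤ i then 1 else 0)]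
  induction ni with
  | zero =>
    rw [Nat.add_zero]
    exact Finset.sum_eq_zero fun i hi => by
      simp only [Finset.mem_range] at hi; simp [Nat.not_le.mpr hi]
  | succ n ih =>
    rw [show ne + (n + 1) = (ne + n) + 1 by ring, Finset.sum_range_succ, ih,
      if_pos (by omega)]

private lemma aux_orth {V : Type*} [NormedAddCommGroup V] [InnerProductSpace ℝ V]
    {x x' y : V} (hle : ∀ t : ℝ, ‖x - x'‖ ≤ ‖x - (x' + t • (y - x'))‖) :
    ⟪x - x', y - x'⟫ = 0 := by
  set u := x - x' with hu
  set v := y - x' with hv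
  set c := ⟪u, v⟫ with hc
  set n := ‖v‖ ^ 2 with hn
  have hn0 : 0 ≤ n := by positivity
  have key : ∀ t : ℝ, 0 ≤ t ^ 2 * n - 2 * t * c := by
    intro t
    have h := hle t
    have hxv : x - (x' + t • v) = u - t • v := by rw [hu]; abel
    have h2 : ‖x - (x' + t • v)‖ ^ 2 = ‖u‖ ^ 2 - 2 * (t * c) + t ^ 2 * n := by
      rw [hxv, norm_sub_sq_real, real_inner_smul_right, norm_smul, mul_pow, ← hc,
        Real.norm_eq_abs, sq_abs, ← hn]
    have h3 : ‖u‖ ^ 2 ≤ ‖x - (x' + t • v)‖ ^ 2 := by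
      apply pow_le_pow_left₀ (norm_nonneg _) h
    rw [h2] at h3
    linarith
  have h0 := key (c / (n + 1))
  have hn1 : (0 : ℝ) < n + 1 := by linarith
  have e1 : (c / (n + 1)) ^ 2 * n - 2 * (c / (n + 1)) * c
      = (- c ^ 2 * (n + 2)) / (n + 1) ^ 2 := by
    field_simp
    ring
  rw [e1] at h0
  have h4 : 0 ≤ - c ^ 2 * (n + 2) := by
    rcases div_nonneg_iff.mp h0 with ⟨h, _⟩ | ⟨_, h⟩
    · exact h
    · nlinarith [sq_nonneg (n + 1)]
  have h5 : c ^ 2 ≤ 0 := by nlinarith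
  have : c ^ 2 = 0 := le_antisymm h5 (sq_nonneg c)
  exact pow_eq_zero_iff two_ne_zero |>.mp this

private lemma aux_onestep
    {ne ni d m : ℕ} (hni : 0 < ni) (hm : 0 < m)
    (a : Fin (ne + ni) → EuclideanSpace ℝ (Fin d)) (b : Fin (ne + ni) → ℝ)
    (ha : ∀ i, ‖a i‖ = 1)
    (S : Set (EuclideanSpace ℝ (Fin d)))
    (hSdef : S = {x | (∀ i : Fin (ne + ni), (i : ℕ) < ne → ⟪a i, x⟫ = b i) ∧
                      (∀ i : Fin (ne + ni), ne ≤ (i : ℕ) → ⟪a i, x⟫ ≤ b i)})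
    (hSne : S.Nonempty) (hSclosed : IsClosed S)
    (β : ℝ) (hβ : 0 < β)
    (T : Fin m → Finset (Fin (ne + ni)))
    (hT : IsRowPaving a (Finset.univ.filter fun i : Fin (ne + ni) => (i : ℕ) < ne) m β T)
    (L : ℝ) (hL : 0 < L)
    (hHoffman : ∀ x : EuclideanSpace ℝ (Fin d), Metric.infDist x S ≤
      L * Real.sqrt (∑ i : Fin (ne + ni), (if (i : ℕ) < ne then ⟪a i, x⟫ - b i
                           else max (⟪a i, x⟫ - b i) 0) ^ 2))
    (step : (Fin m ⊕ {i : Fin (ne + ni) // ne ≤ (i : ℕ)}) →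
      EuclideanSpace ℝ (Fin d) → EuclideanSpace ℝ (Fin d))
    (hstepBlock : ∀ (k : Fin m) (x : EuclideanSpace ℝ (Fin d)),
      (∀ i ∈ T k, ⟪a i, step (Sum.inl k) x⟫ = b i) ∧
      (∀ y : EuclideanSpace ℝ (Fin d), (∀ i ∈ T k, ⟪a i, y⟫ = b i) →
        ‖x - step (Sum.inl k) x‖ ≤ ‖x - y‖))
    (hstepRow : ∀ (i : {i : Fin (ne + ni) // ne ≤ (i : ℕ)}) (x : EuclideanSpace ℝ (Fin d)),
      step (Sum.inr i) x = x - max (⟪a i.1, x⟫ - b i.1) 0 • a i.1)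
    (w : (Fin m ⊕ {i : Fin (ne + ni) // ne ≤ (i : ℕ)}) → ℝ)
    (hwBlock : ∀ k : Fin m, w (Sum.inl k) = (β * m / (ni + β * m)) / m)
    (hwRow : ∀ i : {i : Fin (ne + ni) // ne ≤ (i : ℕ)},
      w (Sum.inr i) = (1 - β * m / (ni + β * m)) / ni)
    (x : EuclideanSpace ℝ (Fin d)) :
    ∑ c, w c * Metric.infDist (step c x) S ^ 2 ≤
      (1 - 1 / (L ^ 2 * (ni + β * m))) * Metric.infDist x S ^ 2 := by
  obtain ⟨z, hzS, hdz⟩ := hSclosed.exists_infDist_eq_dist hSne x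
  have hzS' := hzS
  rw [hSdef] at hzS'
  obtain ⟨hzeq, hzle⟩ := hzS'
  have hmR : (0:ℝ) < m := by exact_mod_cast hm
  have hniR : (0:ℝ) < ni := by exact_mod_cast hni
  set N : ℝ := (ni : ℝ) + β * m with hNdef
  have hN0 : 0 < N := by positivity
  set D : ℝ := ‖x - z‖ ^ 2 with hDdef
  have hDd : Metric.infDist x S ^ 2 = D := by rw [hdz, dist_eq_norm]
  have hD0 : 0 ≤ D := by positivity
  have hTeq : ∀ k, ∀ i ∈ T k, (i : ℕ) < ne := by
    intro k i hi
    have h1 : i ∈ Finset.univ.biUnion T := Finset.mem_biUnion.mpr ⟨k, Finset.mem_univ k, hi⟩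
    rw [hT.2.2.1] at h1
    exact (Finset.mem_filter.mp h1).2
  -- block one-step bound
  have hblock : ∀ k : Fin m, ‖step (Sum.inl k) x - z‖ ^ 2 ≤
      D - (1 / β) * ∑ i ∈ T k, (⟪a i, x⟫ - b i) ^ 2 := by
    intro k
    obtain ⟨hfeas, hmin⟩ := hstepBlock k x
    set x' := step (Sum.inl k) x with hx'
    have hzfeas : ∀ i ∈ T k, ⟪a i, z⟫ = b i := fun i hi => hzeq i (hTeq k i hi)
    have horth : ⟪x - x', z - x'⟫ = 0 := by
      apply aux_orth
      intro t
      apply hmin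
      intro i hi
      rw [inner_add_right, real_inner_smul_right, inner_sub_right, hzfeas i hi, hfeas i hi]
      ring
    have hpyth : D = ‖x - x'‖ ^ 2 + ‖x' - z‖ ^ 2 := by
      have h0 : ⟪x - x', x' - z⟫ = 0 := by
        rw [show x' - z = -(z - x') by abel, inner_neg_right, horth, neg_zero]
      have hsplit : x - z = (x - x') + (x' - z) := by abel
      rw [hDdef, hsplit, norm_add_sq_real, h0]
      ring
    have hres : ∑ i ∈ T k, (⟪a i, x⟫ - b i) ^ 2 ≤ β * ‖x - x'‖ ^ 2 := by
      have h1 := hT.2.2.2 k (x - x')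
      calc ∑ i ∈ T k, (⟪a i, x⟫ - b i) ^ 2 = ∑ i ∈ T k, ⟪a i, x - x'⟫ ^ 2 := by
            refine Finset.sum_congr rfl fun i hi => ?_
            rw [inner_sub_right, hfeas i hi]
        _ ≤ β * ‖x - x'‖ ^ 2 := h1
    have h2 : (1 / β) * ∑ i ∈ T k, (⟪a i, x⟫ - b i) ^ 2 ≤ ‖x - x'‖ ^ 2 := by
      rw [one_div, inv_mul_le_iff₀ hβ]
      exact hres
    linarith
  -- row one-step bound
  have hrow : ∀ i : {i : Fin (ne + ni) // ne ≤ (i : ℕ)},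
      ‖step (Sum.inr i) x - z‖ ^ 2 ≤ D - max (⟪a i.1, x⟫ - b i.1) 0 ^ 2 := by
    intro i
    set r : ℝ := ⟪a i.1, x⟫ - b i.1 with hr
    set h : ℝ := max r 0 with hh
    have hz_le : ⟪a i.1, z⟫ ≤ b i.1 := hzle i.1 i.2
    have hinner : r ≤ ⟪a i.1, x - z⟫ := by
      rw [inner_sub_right]; rw [hr]; linarith
    have hcalc : ‖step (Sum.inr i) x - z‖ ^ 2
        = D - 2 * (h * ⟪a i.1, x - z⟫) + h ^ 2 := by
      rw [hstepRow i x]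
      have hsplit : x - h • a i.1 - z = (x - z) - h • a i.1 := by abel
      rw [hsplit, norm_sub_sq_real, real_inner_smul_right, norm_smul, mul_pow,
        Real.norm_eq_abs, sq_abs, ha i.1, real_inner_comm (x - z) (a i.1)]
      rw [hDdef]; ring
    have hkey : h ^ 2 ≤ h * ⟪a i.1, x - z⟫ := by
      rcases le_or_gt r 0 with hr0 | hr0
      · rw [hh, max_eq_right hr0]; simp
      · rw [hh, max_eq_left hr0.le]; nlinarith
    linarith
  -- distance squared bounded by distance to z
  have hdistsq : ∀ y : EuclideanSpace ℝ (Fin d),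
      Metric.infDist y S ^ 2 ≤ ‖y - z‖ ^ 2 := by
    intro y
    have h1 : Metric.infDist y S ≤ dist y z := Metric.infDist_le_dist_of_mem hzS
    have h2 := pow_le_pow_left₀ Metric.infDist_nonneg h1 2
    rwa [dist_eq_norm] at h2
  -- the sums of residuals
  set Eeq : ℝ := ∑ i ∈ Finset.univ.filter (fun i : Fin (ne + ni) => (i : ℕ) < ne),
      (⟪a i, x⟫ - b i) ^ 2 with hEeqdef
  set Ein : ℝ := ∑ i ∈ Finset.univ.filter (fun i : Fin (ne + ni) => ne ≤ (i : ℕ)),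
      max (⟪a i, x⟫ - b i) 0 ^ 2 with hEindef
  set Etot : ℝ := ∑ i : Fin (ne + ni), (if (i : ℕ) < ne then ⟪a i, x⟫ - b i
      else max (⟪a i, x⟫ - b i) 0) ^ 2 with hEtotdef
  have hE0 : 0 ≤ Etot := Finset.sum_nonneg fun i _ => sq_nonneg _
  have hEeqsum : ∑ k : Fin m, ∑ i ∈ T k, (⟪a i, x⟫ - b i) ^ 2 = Eeq := by
    rw [hEeqdef, ← hT.2.2.1]
    rw [Finset.sum_biUnion]
    intro k _ l _ hkl
    exact hT.2.1 k l hkl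
  have hEinsum : ∑ i : {i : Fin (ne + ni) // ne ≤ (i : ℕ)},
      max (⟪a i.1, x⟫ - b i.1) 0 ^ 2 = Ein := by
    rw [hEindef]
    exact (Finset.sum_subtype (Finset.univ.filter fun i : Fin (ne + ni) => ne ≤ (i : ℕ))
      (fun i => by simp) (fun i => max (⟪a i, x⟫ - b i) 0 ^ 2)).symm
  have hEtot : Eeq + Ein = Etot := by
    rw [hEtotdef, ← Finset.sum_filter_add_sum_filter_not Finset.univ
      (fun i : Fin (ne + ni) => (i : ℕ) < ne)]
    congr 1
    · refine Finset.sum_congr rfl fun i hi => ?_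
      rw [if_pos (Finset.mem_filter.mp hi).2]
    · rw [hEindef]
      refine Finset.sum_congr (by simp [not_lt]) fun i hi => ?_
      rw [if_neg (by simpa [not_lt] using (Finset.mem_filter.mp hi).2)]
  -- Hoffman in squared form
  have hHoff2 : D ≤ L ^ 2 * Etot := by
    rw [← hDd]
    calc Metric.infDist x S ^ 2 ≤ (L * Real.sqrt Etot) ^ 2 :=
          pow_le_pow_left₀ Metric.infDist_nonneg (hHoffman x) 2
      _ = L ^ 2 * Etot := by rw [mul_pow, Real.sq_sqrt hE0]
  -- weights
  set p : ℝ := β * m / N with hpdef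
  have hp0 : 0 ≤ p := by positivity
  have h1p : 1 - p = (ni : ℝ) / N := by
    rw [hpdef, eq_div_iff hN0.ne', sub_mul, div_mul_cancel₀ _ hN0.ne', hNdef]
    ring
  have h1p0 : 0 ≤ 1 - p := by rw [h1p]; positivity
  -- main computation
  have hmain : ∑ c, w c * Metric.infDist (step c x) S ^ 2 ≤ D - (1 / N) * Etot := by
    calc ∑ c, w c * Metric.infDist (step c x) S ^ 2
        = ∑ k : Fin m, w (Sum.inl k) * Metric.infDist (step (Sum.inl k) x) S ^ 2
          + ∑ i : {i : Fin (ne + ni) // ne ≤ (i : ℕ)},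
            w (Sum.inr i) * Metric.infDist (step (Sum.inr i) x) S ^ 2 :=
          Fintype.sum_sum_type _
      _ ≤ ∑ k : Fin m, (p / m) * (D - (1 / β) * ∑ i ∈ T k, (⟪a i, x⟫ - b i) ^ 2)
          + ∑ i : {i : Fin (ne + ni) // ne ≤ (i : ℕ)},
            ((1 - p) / ni) * (D - max (⟪a i.1, x⟫ - b i.1) 0 ^ 2) := by
          refine add_le_add (Finset.sum_le_sum fun k _ => ?_)
            (Finset.sum_le_sum fun i _ => ?_)
          · rw [hwBlock k]
            refine mul_le_mul_of_nonneg_left ?_ (by positivity)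
            exact le_trans (hdistsq _) (hblock k)
          · rw [hwRow i]
            refine mul_le_mul_of_nonneg_left ?_ (by positivity)
            exact le_trans (hdistsq _) (hrow i)
      _ = (p / m) * ((m : ℝ) * D - (1 / β) * Eeq)
          + ((1 - p) / ni) * ((ni : ℝ) * D - Ein) := by
          have hS1 : ∑ k : Fin m, (p / m) * (D - (1 / β) * ∑ i ∈ T k, (⟪a i, x⟫ - b i) ^ 2)
              = (p / m) * ((m : ℝ) * D - (1 / β) * Eeq) := by
            rw [← Finset.mul_sum, Finset.sum_sub_distrib, Finset.sum_const,
              Finset.card_univ, Fintype.card_fin, ← Finset.mul_sum, hEeqsum, nsmul_eq_mul]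
          have hS2 : ∑ i : {i : Fin (ne + ni) // ne ≤ (i : ℕ)},
              ((1 - p) / ni) * (D - max (⟪a i.1, x⟫ - b i.1) 0 ^ 2)
              = ((1 - p) / ni) * ((ni : ℝ) * D - Ein) := by
            rw [← Finset.mul_sum, Finset.sum_sub_distrib, Finset.sum_const,
              Finset.card_univ, Fintype.card_subtype, aux_card, ← hEinsum, nsmul_eq_mul]
          rw [hS1, hS2]
      _ = D - (1 / N) * Etot := by
          rw [← hEtot, hpdef, h1p]
          field_simp
          ring
  have hfinal : D - (1 / N) * Etot ≤ (1 - 1 / (L ^ 2 * N)) * D := by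
    have h6 : D / L ^ 2 ≤ Etot := by
      rw [div_le_iff₀ (by positivity)]
      nlinarith [hHoff2]
    have h7 : D / (L ^ 2 * N) ≤ (1 / N) * Etot := by
      calc D / (L ^ 2 * N) = D / L ^ 2 / N := (div_div _ _ _).symm
        _ = (1 / N) * (D / L ^ 2) := by rw [div_eq_mul_one_div, mul_comm]
        _ ≤ (1 / N) * Etot := mul_le_mul_of_nonneg_left h6 (by positivity)
    have h8 : (1 - 1 / (L ^ 2 * N)) * D = D - D / (L ^ 2 * N) := by ring
    linarith
  rw [hDd]
  calc ∑ c, w c * Metric.infDist (step c x) S ^ 2 ≤ D - (1 / N) * Etot := hmain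
    _ ≤ (1 - 1 / (L ^ 2 * N)) * D := hfinal

private lemma aux_q
    {ne ni d m : ℕ} (hni : 0 < ni) (hm : 0 < m)
    (a : Fin (ne + ni) → EuclideanSpace ℝ (Fin d)) (b : Fin (ne + ni) → ℝ)
    (ha : ∀ i, ‖a i‖ = 1)
    (S : Set (EuclideanSpace ℝ (Fin d)))
    (hSdef : S = {x | (∀ i : Fin (ne + ni), (i : ℕ) < ne → ⟪a i, x⟫ = b i) ∧
                      (∀ i : Fin (ne + ni), ne ≤ (i : ℕ) → ⟪a i, x⟫ ≤ b i)})
    (hSne : S.Nonempty) (hSclosed : IsClosed S)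
    (β : ℝ) (hβ : 0 < β)
    (T : Fin m → Finset (Fin (ne + ni)))
    (hT : IsRowPaving a (Finset.univ.filter fun i : Fin (ne + ni) => (i : ℕ) < ne) m β T)
    (L : ℝ) (hL : 0 < L)
    (hHoffman : ∀ x : EuclideanSpace ℝ (Fin d), Metric.infDist x S ≤
      L * Real.sqrt (∑ i : Fin (ne + ni), (if (i : ℕ) < ne then ⟪a i, x⟫ - b i
                           else max (⟪a i, x⟫ - b i) 0) ^ 2)) :
    1 ≤ L ^ 2 * ((ni : ℝ) + β * m) := by
  have hSne' := hSne
  obtain ⟨z0, hz0⟩ := hSne'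
  have hne_lt : ne < ne + ni := by omega
  set i0 : Fin (ne + ni) := ⟨ne, hne_lt⟩ with hi0
  have hi0le : ne ≤ (i0 : ℕ) := le_refl ne
  set x : EuclideanSpace ℝ (Fin d) := z0 + (b i0 + 1 - ⟪a i0, z0⟫) • a i0 with hxdef
  have hinner : ⟪a i0, x⟫ = b i0 + 1 := by
    rw [hxdef, inner_add_right, real_inner_smul_right, real_inner_self_eq_norm_sq, ha i0]
    ring
  have hxS : x ∉ S := by
    rw [hSdef]
    intro hmem
    have h := hmem.2 i0 hi0le
    rw [hinner] at h
    linarith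
  have hd0 : 0 < Metric.infDist x S := (hSclosed.notMem_iff_infDist_pos hSne).mp hxS
  obtain ⟨z, hzS, hdz⟩ := hSclosed.exists_infDist_eq_dist hSne x
  have hzS' := hzS
  rw [hSdef] at hzS'
  obtain ⟨hzeq, hzle⟩ := hzS'
  set D : ℝ := ‖x - z‖ ^ 2 with hDdef
  have hDpos : 0 < D := by
    rw [hDdef, ← dist_eq_norm, ← hdz]
    positivity
  have hTeq : ∀ k, ∀ i ∈ T k, (i : ℕ) < ne := by
    intro k i hi
    have h1 : i ∈ Finset.univ.biUnion T := Finset.mem_biUnion.mpr ⟨k, Finset.mem_univ k, hi⟩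
    rw [hT.2.2.1] at h1
    exact (Finset.mem_filter.mp h1).2
  set Etot : ℝ := ∑ i : Fin (ne + ni), (if (i : ℕ) < ne then ⟪a i, x⟫ - b i
      else max (⟪a i, x⟫ - b i) 0) ^ 2 with hEtotdef
  -- split Etot
  have hsplit : Etot = (∑ i ∈ Finset.univ.filter (fun i : Fin (ne + ni) => (i : ℕ) < ne),
        (⟪a i, x⟫ - b i) ^ 2)
      + ∑ i ∈ Finset.univ.filter (fun i : Fin (ne + ni) => ne ≤ (i : ℕ)),
        max (⟪a i, x⟫ - b i) 0 ^ 2 := by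
    rw [hEtotdef, ← Finset.sum_filter_add_sum_filter_not Finset.univ
      (fun i : Fin (ne + ni) => (i : ℕ) < ne)]
    congr 1
    · refine Finset.sum_congr rfl fun i hi => ?_
      rw [if_pos (Finset.mem_filter.mp hi).2]
    · refine Finset.sum_congr (by simp [not_lt]) fun i hi => ?_
      rw [if_neg (by simpa [not_lt] using (Finset.mem_filter.mp hi).2)]
  have hEeq_le : ∑ i ∈ Finset.univ.filter (fun i : Fin (ne + ni) => (i : ℕ) < ne),
      (⟪a i, x⟫ - b i) ^ 2 ≤ (m : ℝ) * (β * D) := by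
    rw [← hT.2.2.1, Finset.sum_biUnion (fun k _ l _ hkl => hT.2.1 k l hkl)]
    calc ∑ k : Fin m, ∑ i ∈ T k, (⟪a i, x⟫ - b i) ^ 2
        ≤ ∑ _k : Fin m, β * D := by
          refine Finset.sum_le_sum fun k _ => ?_
          have h1 := hT.2.2.2 k (x - z)
          calc ∑ i ∈ T k, (⟪a i, x⟫ - b i) ^ 2 = ∑ i ∈ T k, ⟪a i, x - z⟫ ^ 2 := by
                refine Finset.sum_congr rfl fun i hi => ?_
                rw [inner_sub_right, hzeq i (hTeq k i hi)]
            _ ≤ β * D := h1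
      _ = (m : ℝ) * (β * D) := by
          rw [Finset.sum_const, Finset.card_univ, Fintype.card_fin, nsmul_eq_mul]
  have hEin_le : ∑ i ∈ Finset.univ.filter (fun i : Fin (ne + ni) => ne ≤ (i : ℕ)),
      max (⟪a i, x⟫ - b i) 0 ^ 2 ≤ (ni : ℝ) * D := by
    calc ∑ i ∈ Finset.univ.filter (fun i : Fin (ne + ni) => ne ≤ (i : ℕ)),
        max (⟪a i, x⟫ - b i) 0 ^ 2
        ≤ ∑ _i ∈ Finset.univ.filter (fun i : Fin (ne + ni) => ne ≤ (i : ℕ)), D := by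
          refine Finset.sum_le_sum fun i hi => ?_
          have hile : ne ≤ (i : ℕ) := (Finset.mem_filter.mp hi).2
          have h1 : ⟪a i, x⟫ - b i ≤ ⟪a i, x - z⟫ := by
            rw [inner_sub_right]
            have := hzle i hile
            linarith
          have h2 : |⟪a i, x - z⟫| ≤ ‖x - z‖ := by
            have := abs_real_inner_le_norm (a i) (x - z)
            rwa [ha i, one_mul] at this
          have h3 : max (⟪a i, x⟫ - b i) 0 ≤ |⟪a i, x - z⟫| :=
            max_le (h1.trans (le_abs_self _)) (abs_nonneg _)
          calc max (⟪a i, x⟫ - b i) 0 ^ 2 ≤ |⟪a i, x - z⟫| ^ 2 :=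
                pow_le_pow_left₀ (le_max_right _ _) h3 2
            _ ≤ ‖x - z‖ ^ 2 := pow_le_pow_left₀ (abs_nonneg _) h2 2
            _ = D := hDdef.symm
      _ = (ni : ℝ) * D := by
          rw [Finset.sum_const, aux_card, nsmul_eq_mul]
  have hEle : Etot ≤ ((ni : ℝ) + β * m) * D := by
    rw [hsplit]
    calc _ ≤ (m : ℝ) * (β * D) + (ni : ℝ) * D := add_le_add hEeq_le hEin_le
      _ = ((ni : ℝ) + β * m) * D := by ring
  have hE0 : 0 ≤ Etot := Finset.sum_nonneg fun i _ => sq_nonneg _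
  have hHoff2 : D ≤ L ^ 2 * Etot := by
    have hdd : Metric.infDist x S ^ 2 = D := by rw [hdz, dist_eq_norm]
    rw [← hdd]
    calc Metric.infDist x S ^ 2 ≤ (L * Real.sqrt Etot) ^ 2 :=
          pow_le_pow_left₀ Metric.infDist_nonneg (hHoffman x) 2
      _ = L ^ 2 * Etot := by rw [mul_pow, Real.sq_sqrt hE0]
  have hfin : D ≤ L ^ 2 * ((ni : ℝ) + β * m) * D := by
    calc D ≤ L ^ 2 * Etot := hHoff2
      _ ≤ L ^ 2 * (((ni : ℝ) + β * m) * D) := by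
          exact mul_le_mul_of_nonneg_left hEle (by positivity)
      _ = L ^ 2 * ((ni : ℝ) + β * m) * D := by ring
  nlinarith [hDpos, hfin]

/-- **Theorem (Convergence of Algorithm 1).**
Consider a standardized system of `n_e` equalities `⟪a i, x⟫ = b i` (rows `i < n_e`) and
`n_i` inequalities `⟪a i, x⟫ ≤ b i` (rows `i ≥ n_e`), with nonempty feasible set `S`, an
`(m, β)` row paving `T` of the equality submatrix `A_=`, and a Hoffman constant `L` for the
system.  Algorithm 1 draws, at each iteration independently, with probability
`p = βm/(n_i + βm)` a uniformly random block `τ` of `T` and projects orthogonally onto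
`{x : A_τ x = b_τ}`, and otherwise a uniformly random inequality row `i`, performing the
update `x ↦ x − max(⟪a i, x⟫ − b i, 0) • a i`.  Then for every `j ≥ 1`,
`𝔼[d(x_j, S)²] ≤ (1 − 1/(L²(n_i + βm)))^j ⬝ d(x_0, S)²`, the expectation being over the `j`
independent choices (the choice at one step is `c : Fin m ⊕ {i // n_e ≤ i}`, with
probability mass `w c`). -/
theorem block_kaczmarz_with_inequalities_convergence
    {ne ni d m : ℕ} (hni : 0 < ni) (hm : 0 < m)
    (a : Fin (ne + ni) → EuclideanSpace ℝ (Fin d)) (b : Fin (ne + ni) → ℝ)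
    -- the matrix is standardized
    (ha : ∀ i, ‖a i‖ = 1)
    -- the feasible set
    (S : Set (EuclideanSpace ℝ (Fin d)))
    (hSdef : S = {x | (∀ i : Fin (ne + ni), (i : ℕ) < ne → ⟪a i, x⟫ = b i) ∧
                      (∀ i : Fin (ne + ni), ne ≤ (i : ℕ) → ⟪a i, x⟫ ≤ b i)})
    (hSne : S.Nonempty)
    -- an (m, β) row paving of the equality submatrix A_=
    (β : ℝ) (hβ : 0 < β)
    (T : Fin m → Finset (Fin (ne + ni)))
    (hT : IsRowPaving a (Finset.univ.filter fun i : Fin (ne + ni) => (i : ℕ) < ne) m β T)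
    -- a Hoffman constant for the system: d(x, S) ≤ L ‖e(Ax − b)‖₂
    (L : ℝ) (hL : 0 < L)
    (hHoffman : ∀ x : EuclideanSpace ℝ (Fin d), Metric.infDist x S ≤
      L * Real.sqrt (∑ i : Fin (ne + ni), (if (i : ℕ) < ne then ⟪a i, x⟫ - b i
                           else max (⟪a i, x⟫ - b i) 0) ^ 2))
    -- the one-step update of Algorithm 1:
    (step : (Fin m ⊕ {i : Fin (ne + ni) // ne ≤ (i : ℕ)}) →
      EuclideanSpace ℝ (Fin d) → EuclideanSpace ℝ (Fin d))
    -- if a block τ = T k is chosen, the iterate is orthogonally projected onto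
    -- the affine subspace {y : A_τ y = b_τ} (the nearest feasible point for the block)
    (hstepBlock : ∀ (k : Fin m) (x : EuclideanSpace ℝ (Fin d)),
      (∀ i ∈ T k, ⟪a i, step (Sum.inl k) x⟫ = b i) ∧
      (∀ y : EuclideanSpace ℝ (Fin d), (∀ i ∈ T k, ⟪a i, y⟫ = b i) →
        ‖x - step (Sum.inl k) x‖ ≤ ‖x - y‖))
    -- if an inequality row i is chosen, the simple Kaczmarz update for inequalities is used
    (hstepRow : ∀ (i : {i : Fin (ne + ni) // ne ≤ (i : ℕ)}) (x : EuclideanSpace ℝ (Fin d)),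
      step (Sum.inr i) x = x - max (⟪a i.1, x⟫ - b i.1) 0 • a i.1)
    -- the probability mass of each single random choice
    (w : (Fin m ⊕ {i : Fin (ne + ni) // ne ≤ (i : ℕ)}) → ℝ)
    (hwBlock : ∀ k : Fin m, w (Sum.inl k) = (β * m / (ni + β * m)) / m)
    (hwRow : ∀ i : {i : Fin (ne + ni) // ne ≤ (i : ℕ)},
      w (Sum.inr i) = (1 - β * m / (ni + β * m)) / ni)
    -- arbitrary initial iterate, number of iterations
    (x0 : EuclideanSpace ℝ (Fin d)) (j : ℕ) (hj : 1 ≤ j) :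
    -- 𝔼[d(x_j, S)²] ≤ (1 − 1/(L²(n_i + βm)))^j ⬝ d(x_0, S)²
    ∑ ω : Fin j → (Fin m ⊕ {i : Fin (ne + ni) // ne ≤ (i : ℕ)}),
        (∏ k, w (ω k)) * Metric.infDist (kacIter step x0 j ω) S ^ 2 ≤
      (1 - 1 / (L ^ 2 * (ni + β * m))) ^ j * Metric.infDist x0 S ^ 2 := by
  clear hj
  -- closedness of S
  have hSclosed : IsClosed S := by
    rw [hSdef]
    have heq : {x : EuclideanSpace ℝ (Fin d) |
          (∀ i : Fin (ne + ni), (i : ℕ) < ne → ⟪a i, x⟫ = b i) ∧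
          (∀ i : Fin (ne + ni), ne ≤ (i : ℕ) → ⟪a i, x⟫ ≤ b i)}
        = ⋂ i : Fin (ne + ni), {x : EuclideanSpace ℝ (Fin d) |
            ((i : ℕ) < ne → ⟪a i, x⟫ = b i) ∧ (ne ≤ (i : ℕ) → ⟪a i, x⟫ ≤ b i)} := by
      ext x
      simp only [Set.mem_setOf_eq, Set.mem_iInter]
      constructor
      · rintro ⟨h1, h2⟩ i; exact ⟨h1 i, h2 i⟩
      · intro h; exact ⟨fun i => (h i).1, fun i => (h i).2⟩
    rw [heq]
    refine isClosed_iInter fun i => ?_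
    have hcont : Continuous fun x : EuclideanSpace ℝ (Fin d) => ⟪a i, x⟫ :=
      Continuous.inner continuous_const continuous_id
    by_cases hi : (i : ℕ) < ne
    · have : {x : EuclideanSpace ℝ (Fin d) |
            ((i : ℕ) < ne → ⟪a i, x⟫ = b i) ∧ (ne ≤ (i : ℕ) → ⟪a i, x⟫ ≤ b i)}
          = {x : EuclideanSpace ℝ (Fin d) | ⟪a i, x⟫ = b i} := by
        ext x; simp [hi, Nat.not_le.mpr hi]
      rw [this]
      exact isClosed_eq hcont continuous_const
    · have : {x : EuclideanSpace ℝ (Fin d) |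
            ((i : ℕ) < ne → ⟪a i, x⟫ = b i) ∧ (ne ≤ (i : ℕ) → ⟪a i, x⟫ ≤ b i)}
          = {x : EuclideanSpace ℝ (Fin d) | ⟪a i, x⟫ ≤ b i} := by
        ext x; simp [hi, Nat.le_of_not_lt hi]
      rw [this]
      exact isClosed_le hcont continuous_const
  set q : ℝ := 1 - 1 / (L ^ 2 * ((ni : ℝ) + β * m)) with hqdef
  have hmR : (0:ℝ) < m := by exact_mod_cast hm
  have hniR : (0:ℝ) < ni := by exact_mod_cast hni
  have hN0 : (0:ℝ) < (ni : ℝ) + β * m := by positivity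
  have hq1 : 1 ≤ L ^ 2 * ((ni : ℝ) + β * m) :=
    aux_q hni hm a b ha S hSdef hSne hSclosed β hβ T hT L hL hHoffman
  have hq0 : 0 ≤ q := by
    rw [hqdef, sub_nonneg]
    exact div_le_one_of_le₀ hq1 (by positivity)
  have hw0 : ∀ c, 0 ≤ w c := by
    rintro (k | i)
    · rw [hwBlock k]; positivity
    · rw [hwRow i]
      have h1 : 1 - β * (m : ℝ) / ((ni : ℝ) + β * m) = (ni : ℝ) / ((ni : ℝ) + β * m) := by
        rw [eq_div_iff hN0.ne', sub_mul, div_mul_cancel₀ _ hN0.ne']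
        ring
      rw [h1]
      positivity
  have hone := aux_onestep hni hm a b ha S hSdef hSne hSclosed β hβ T hT L hL hHoffman
    step hstepBlock hstepRow w hwBlock hwRow
  induction j with
  | zero => simp [kacIter]
  | succ j ih =>
    have hiter : ∀ (c : Fin m ⊕ {i : Fin (ne + ni) // ne ≤ (i : ℕ)}) (f : Fin j → (Fin m ⊕ {i : Fin (ne + ni) // ne ≤ (i : ℕ)})),
        kacIter step x0 (j + 1) (Fin.snoc f c) = step c (kacIter step x0 j f) := by
      intro c f
      have hfC : (fun k : Fin j =>
          (Fin.snoc f c : Fin (j+1) → (Fin m ⊕ {i : Fin (ne + ni) // ne ≤ (i : ℕ)}))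
            k.castSucc) = f :=
        funext fun k => by simp
      have h1 : kacIter step x0 (j + 1) (Fin.snoc f c) =
          step ((Fin.snoc f c : Fin (j+1) → (Fin m ⊕ {i : Fin (ne + ni) // ne ≤ (i : ℕ)}))
              (Fin.last j))
            (kacIter step x0 j fun k =>
              (Fin.snoc f c : Fin (j+1) → (Fin m ⊕ {i : Fin (ne + ni) // ne ≤ (i : ℕ)}))
                k.castSucc) := rfl
      rw [h1, Fin.snoc_last, hfC]
    have hprod : ∀ (c : Fin m ⊕ {i : Fin (ne + ni) // ne ≤ (i : ℕ)}) (f : Fin j → (Fin m ⊕ {i : Fin (ne + ni) // ne ≤ (i : ℕ)})),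
        ∏ k : Fin (j + 1), w ((Fin.snoc f c : Fin (j+1) → (Fin m ⊕ {i : Fin (ne + ni) // ne ≤ (i : ℕ)})) k)
          = (∏ k : Fin j, w (f k)) * w c := by
      intro c f
      rw [Fin.prod_univ_castSucc]
      simp [Fin.snoc_castSucc, Fin.snoc_last]
    calc ∑ ω : Fin (j + 1) → (Fin m ⊕ {i : Fin (ne + ni) // ne ≤ (i : ℕ)}),
          (∏ k, w (ω k)) * Metric.infDist (kacIter step x0 (j + 1) ω) S ^ 2
        = ∑ cf : (Fin m ⊕ {i : Fin (ne + ni) // ne ≤ (i : ℕ)}) × (Fin j → (Fin m ⊕ {i : Fin (ne + ni) // ne ≤ (i : ℕ)})),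
            (∏ k : Fin j, w (cf.2 k)) * w cf.1
              * Metric.infDist (step cf.1 (kacIter step x0 j cf.2)) S ^ 2 := by
          refine (Fintype.sum_equiv (Fin.snocEquiv (fun _ => (Fin m ⊕ {i : Fin (ne + ni) // ne ≤ (i : ℕ)}))) _ _ fun cf => ?_).symm
          have he : (Fin.snocEquiv (fun _ => (Fin m ⊕ {i : Fin (ne + ni) // ne ≤ (i : ℕ)}))) cf = Fin.snoc cf.2 cf.1 := rfl
          rw [he, hprod cf.1 cf.2, hiter cf.1 cf.2]
      _ = ∑ f : Fin j → (Fin m ⊕ {i : Fin (ne + ni) // ne ≤ (i : ℕ)}), ∑ c : (Fin m ⊕ {i : Fin (ne + ni) // ne ≤ (i : ℕ)}),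
            (∏ k : Fin j, w (f k)) * (w c
              * Metric.infDist (step c (kacIter step x0 j f)) S ^ 2) := by
          rw [Fintype.sum_prod_type, Finset.sum_comm]
          refine Finset.sum_congr rfl fun f _ => Finset.sum_congr rfl fun c _ => by ring
      _ = ∑ f : Fin j → (Fin m ⊕ {i : Fin (ne + ni) // ne ≤ (i : ℕ)}), (∏ k : Fin j, w (f k)) *
            ∑ c : (Fin m ⊕ {i : Fin (ne + ni) // ne ≤ (i : ℕ)}), w c * Metric.infDist (step c (kacIter step x0 j f)) S ^ 2 := by
          refine Finset.sum_congr rfl fun f _ => ?_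
          rw [Finset.mul_sum]
      _ ≤ ∑ f : Fin j → (Fin m ⊕ {i : Fin (ne + ni) // ne ≤ (i : ℕ)}), (∏ k : Fin j, w (f k)) *
            (q * Metric.infDist (kacIter step x0 j f) S ^ 2) := by
          refine Finset.sum_le_sum fun f _ => ?_
          exact mul_le_mul_of_nonneg_left (hone (kacIter step x0 j f))
            (Finset.prod_nonneg fun k _ => hw0 (f k))
      _ = q * ∑ f : Fin j → (Fin m ⊕ {i : Fin (ne + ni) // ne ≤ (i : ℕ)}),
            (∏ k : Fin j, w (f k)) * Metric.infDist (kacIter step x0 j f) S ^ 2 := by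
          rw [Finset.mul_sum]
          exact Finset.sum_congr rfl fun f _ => by ring
      _ ≤ q * ((1 - 1 / (L ^ 2 * ((ni : ℝ) + β * m))) ^ j * Metric.infDist x0 S ^ 2) :=
          mul_le_mul_of_nonneg_left ih hq0
      _ = (1 - 1 / (L ^ 2 * ((ni : ℝ) + β * m))) ^ (j + 1) * Metric.infDist x0 S ^ 2 := by
          rw [hqdef]; ring
end
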